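/- Let K^W_*(F) = K^{MW}_*(F)/(h) denote Witt K-theory of a real closed field F, which is isomorphic to Z[η, [-1]]/(2 + [-1]η). Then localizing at [-1] gives an isomorphism [-1]^{-1} K^{MW}_*(F) ≅ Z[[-1], [-1]^{-1}], the Laurent polynomial ring over Z in the degree-1 variable [-1]. -/

import Mathlib

/-- Generators of Milnor–Witt K-theory: a symbol `[u]` for each unit `u ∈ Fˣ`
(`Sum.inl u`) and the element `η` (`Sum.inr ()`). -/
inductive MWRel (F : Type) [Field F] :
    FreeAlgebra ℤ (Fˣ ⊕ Unit) → FreeAlgebra ℤ (Fˣ ⊕ Unit) → Prop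
  | twistedLog (u v : Fˣ) :
      MWRel F (FreeAlgebra.ι ℤ (Sum.inl (u * v)))
        (FreeAlgebra.ι ℤ (Sum.inl u) + FreeAlgebra.ι ℤ (Sum.inl v) +
          FreeAlgebra.ι ℤ (Sum.inr ()) * FreeAlgebra.ι ℤ (Sum.inl u) *
            FreeAlgebra.ι ℤ (Sum.inl v))
  | steinberg (u v : Fˣ) (h : (u : F) + (v : F) = 1) :
      MWRel F (FreeAlgebra.ι ℤ (Sum.inl u) * FreeAlgebra.ι ℤ (Sum.inl v)) 0
  | etaComm (u : Fˣ) :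
      MWRel F (FreeAlgebra.ι ℤ (Sum.inl u) * FreeAlgebra.ι ℤ (Sum.inr ()))
        (FreeAlgebra.ι ℤ (Sum.inr ()) * FreeAlgebra.ι ℤ (Sum.inl u))
  | witt :
      MWRel F ((2 + FreeAlgebra.ι ℤ (Sum.inl (-1 : Fˣ)) * FreeAlgebra.ι ℤ (Sum.inr ())) *
        FreeAlgebra.ι ℤ (Sum.inr ())) 0

/-- The Milnor–Witt K-theory ring `K^{MW}_*(F)` (underlying ungraded ring). -/
def MW (F : Type) [Field F] : Type := RingQuot (MWRel F)

noncomputable instance (F : Type) [Field F] : Ring (MW F) :=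
  inferInstanceAs (Ring (RingQuot (MWRel F)))

/-- The symbol `[u]` in Milnor–Witt K-theory. -/
noncomputable def MWsym (F : Type) [Field F] (u : Fˣ) : MW F :=
  RingQuot.mkRingHom (MWRel F) (FreeAlgebra.ι ℤ (Sum.inl u))

/-- The element `η` in Milnor–Witt K-theory. -/
noncomputable def MWeta (F : Type) [Field F] : MW F :=
  RingQuot.mkRingHom (MWRel F) (FreeAlgebra.ι ℤ (Sum.inr ()))



open LaurentPolynomial

-- test pieces for f construction
noncomputable def phi (F : Type) [Field F] [LinearOrder F] [IsStrictOrderedRing F] : (Fˣ ⊕ Unit) → LaurentPolynomial ℤ :=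
  fun x => match x with
  | Sum.inl u => if 0 < (u : F) then 0 else T 1
  | Sum.inr _ => -2 * T (-1)

lemma hT1 : (T 1 : LaurentPolynomial ℤ) * T (-1) = 1 := by
  rw [← T_add]; norm_num

lemma MW_log (F : Type) [Field F] (u v : Fˣ) :
    MWsym F (u * v) = MWsym F u + MWsym F v + MWeta F * MWsym F u * MWsym F v := by
  have h := RingQuot.mkRingHom_rel (MWRel.twistedLog (F := F) u v)
  simp only [map_add, map_mul] at h
  exact h

lemma MW_steinberg (F : Type) [Field F] (u v : Fˣ) (h : (u : F) + (v : F) = 1) :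
    MWsym F u * MWsym F v = 0 := by
  have h2 := RingQuot.mkRingHom_rel (MWRel.steinberg (F := F) u v h)
  simp only [map_mul, map_zero] at h2
  exact h2

lemma MW_etaComm (F : Type) [Field F] (u : Fˣ) :
    MWsym F u * MWeta F = MWeta F * MWsym F u := by
  have h2 := RingQuot.mkRingHom_rel (MWRel.etaComm (F := F) u)
  simp only [map_mul] at h2
  exact h2

lemma phi_rel (F : Type) [Field F] [LinearOrder F] [IsStrictOrderedRing F] :
    ∀ ⦃x y : FreeAlgebra ℤ (Fˣ ⊕ Unit)⦄, MWRel F x y →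
      (FreeAlgebra.lift ℤ (phi F)).toRingHom x = (FreeAlgebra.lift ℤ (phi F)).toRingHom y := by
  intro x y h
  induction h with
  | twistedLog u v =>
    simp only [AlgHom.toRingHom_eq_coe, RingHom.coe_coe, map_add, map_mul,
      FreeAlgebra.lift_ι_apply, phi]
    have hu := u.ne_zero
    have hv := v.ne_zero
    have huv : ((u * v : Fˣ) : F) = (u : F) * v := Units.val_mul u v
    rcases lt_or_gt_of_ne hu with hu1 | hu1 <;> rcases lt_or_gt_of_ne hv with hv1 | hv1
    · rw [if_pos (by rw [huv]; exact mul_pos_of_neg_of_neg hu1 hv1),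
        if_neg (not_lt.mpr hu1.le), if_neg (not_lt.mpr hv1.le)]
      linear_combination (2 * (T 1 : LaurentPolynomial ℤ)) * hT1
    · rw [if_neg (by rw [huv]; nlinarith), if_neg (not_lt.mpr hu1.le), if_pos hv1]
      ring
    · rw [if_neg (by rw [huv]; nlinarith), if_pos hu1, if_neg (not_lt.mpr hv1.le)]
      ring
    · rw [if_pos (by rw [huv]; exact mul_pos hu1 hv1), if_pos hu1, if_pos hv1]
      ring
  | steinberg u v h =>
    simp only [AlgHom.toRingHom_eq_coe, RingHom.coe_coe, map_mul, map_zero,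
      FreeAlgebra.lift_ι_apply, phi]
    rcases lt_or_gt_of_ne u.ne_zero with hu1 | hu1
    · have hv1 : 0 < (v : F) := by linarith
      rw [if_pos hv1, mul_zero]
    · rw [if_pos hu1, zero_mul]
  | etaComm u =>
    simp only [AlgHom.toRingHom_eq_coe, RingHom.coe_coe, map_mul, FreeAlgebra.lift_ι_apply]
    ring
  | witt =>
    simp only [AlgHom.toRingHom_eq_coe, RingHom.coe_coe, map_mul, map_add, map_ofNat,
      FreeAlgebra.lift_ι_apply, phi, map_zero]
    rw [if_neg (by norm_num)]
    linear_combination (4 * (T (-1) : LaurentPolynomial ℤ)) * hT1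


noncomputable def fmap (F : Type) [Field F] [LinearOrder F] [IsStrictOrderedRing F] : MW F →+* LaurentPolynomial ℤ :=
  RingQuot.lift ⟨(FreeAlgebra.lift ℤ (phi F)).toRingHom, phi_rel F⟩

lemma fmap_sym (F : Type) [Field F] [LinearOrder F] [IsStrictOrderedRing F] (u : Fˣ) :
    fmap F (MWsym F u) = if 0 < (u : F) then 0 else T 1 := by
  show RingQuot.lift ⟨(FreeAlgebra.lift ℤ (phi F)).toRingHom, phi_rel F⟩
    (RingQuot.mkRingHom (MWRel F) (FreeAlgebra.ι ℤ (Sum.inl u))) = _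
  rw [RingQuot.lift_mkRingHom_apply]
  simp [FreeAlgebra.lift_ι_apply, phi]

lemma fmap_eta (F : Type) [Field F] [LinearOrder F] [IsStrictOrderedRing F] :
    fmap F (MWeta F) = -2 * T (-1) := by
  show RingQuot.lift ⟨(FreeAlgebra.lift ℤ (phi F)).toRingHom, phi_rel F⟩
    (RingQuot.mkRingHom (MWRel F) (FreeAlgebra.ι ℤ (Sum.inr ()))) = _
  rw [RingQuot.lift_mkRingHom_apply]
  simp [FreeAlgebra.lift_ι_apply, phi]

noncomputable def hmap (S : Type) [Ring S] (a : Sˣ) : LaurentPolynomial ℤ →+* S :=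
  AddMonoidAlgebra.liftNCRingHom (Int.castRingHom S) ((Units.coeHom S).comp (zpowersHom Sˣ a))
    (fun x y => Int.cast_commute x _)

lemma hmap_T (S : Type) [Ring S] (a : Sˣ) (n : ℤ) : hmap S a (T n) = ↑(a ^ n) := by
  have h1 : (T n : LaurentPolynomial ℤ) = AddMonoidAlgebra.single n 1 := rfl
  rw [h1, hmap]
  have h2 : ⇑(AddMonoidAlgebra.liftNCRingHom (Int.castRingHom S)
      ((Units.coeHom S).comp (zpowersHom Sˣ a)) (fun x y => Int.cast_commute x _))
      = ⇑(AddMonoidAlgebra.liftNC ((Int.castRingHom S : ℤ →+* S) : ℤ →+ S)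
        ⇑((Units.coeHom S).comp (zpowersHom Sˣ a))) := rfl
  rw [h2, AddMonoidAlgebra.liftNC_single]
  simp [zpowersHom_apply]

lemma ringHom_ext_freeAlg {X S : Type} [Ring S] {f g : FreeAlgebra ℤ X →+* S}
    (h : ∀ x, f (FreeAlgebra.ι ℤ x) = g (FreeAlgebra.ι ℤ x)) : f = g := by
  have h2 : f.toIntAlgHom = g.toIntAlgHom := FreeAlgebra.hom_ext (funext h)
  exact congrArg AlgHom.toRingHom h2


theorem mw_abstract_key (F : Type) [Field F] [LinearOrder F] [IsStrictOrderedRing F]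
    (hsq : ∀ a : F, 0 ≤ a → ∃ b : F, b ^ 2 = a)
    (S : Type) [Ring S] (A : Fˣ → S) (E : S)
    (L1 : ∀ u v : Fˣ, A (u * v) = A u + A v + E * A u * A v)
    (L2 : ∀ u v : Fˣ, (u : F) + (v : F) = 1 → A u * A v = 0)
    (L3 : ∀ u : Fˣ, A u * E = E * A u)
    (a : Sˣ) (ha : (a : S) = A (-1)) :
    (∀ u : Fˣ, 0 < (u : F) → A u = 0) ∧
    (∀ u : Fˣ, (u : F) < 0 → A u = (a : S)) ∧
    E * (a : S) = -2 ∧ (a : S) * E = -2 := by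
  -- `A 1 = 0`
  have hA1 : A 1 = 0 := by
    set u2 : Fˣ := Units.mk0 (2 : F) two_ne_zero with hu2
    have hst : A u2 * A (-1) = 0 := by
      apply L2
      simp [hu2]
      norm_num
    have key : ∀ u : Fˣ, A 1 = -(E * A u * A 1) := by
      intro u
      have h := L1 u 1
      rw [mul_one] at h
      have h2 : A u + (A 1 + E * A u * A 1) = A u + 0 := by
        conv_lhs => rw [← add_assoc, ← h]
        rw [add_zero]
      exact eq_neg_of_add_eq_zero_left (add_left_cancel h2)
    calc A 1 = -(E * A u2 * A 1) := key u2
      _ = -(E * A u2 * -(E * A (-1) * A 1)) := by rw [← key (-1)]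
      _ = E * (A u2 * E) * (A (-1) * A 1) := by noncomm_ring
      _ = E * (E * A u2) * (A (-1) * A 1) := by rw [L3]
      _ = E * E * (A u2 * A (-1)) * A 1 := by noncomm_ring
      _ = 0 := by rw [hst]; noncomm_ring
  -- grouped form of the logarithm relation
  have L1' : ∀ u v : Fˣ, A (u * v) = A u + (1 + E * A u) * A v := by
    intro u v
    calc A (u * v) = A u + A v + E * A u * A v := L1 u v
      _ = A u + (1 + E * A u) * A v := by noncomm_ring
  -- inverse formula
  have D2 : ∀ u : Fˣ, (1 + E * A u) * A u⁻¹ = -A u := by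
    intro u
    have h := L1' u u⁻¹
    rw [mul_inv_cancel, hA1] at h
    exact eq_neg_of_add_eq_zero_right h.symm
  -- `A u * A (-u) = 0`
  have D4 : ∀ u : Fˣ, A u * A (-u) = 0 := by
    intro u
    by_cases hu : u = 1
    · subst hu; rw [hA1, zero_mul]
    · have hu1 : (u : F) ≠ 1 := fun h => hu (Units.val_eq_one.mp h)
      have hu0 : (u : F) ≠ 0 := u.ne_zero
      have hv0 : (1 : F) - (u : F) ≠ 0 := sub_ne_zero.mpr (Ne.symm hu1)
      have hw0 : (1 : F) - ((u : F))⁻¹ ≠ 0 := by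
        rw [sub_ne_zero]
        intro h
        apply hu1
        have := congrArg (fun x => x⁻¹) h
        simpa using this.symm
      set v : Fˣ := Units.mk0 _ hv0 with hvdef
      set w : Fˣ := Units.mk0 _ hw0 with hwdef
      have St1 : A u * A v = 0 := by apply L2; simp [hvdef]
      have St2 : A u⁻¹ * A w = 0 := by apply L2; simp [hwdef]
      have St3 : A u * A w = 0 := by
        have h1 : (1 + E * A u) * A u⁻¹ * A w = 0 := by rw [mul_assoc, St2, mul_zero]
        rw [D2 u] at h1
        have h2 := congrArg Neg.neg h1
        simpa using h2
      have huvw : -u = v * w⁻¹ := by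
        apply Units.ext
        rw [Units.val_mul, Units.val_neg]
        simp only [hvdef, hwdef, Units.val_inv_eq_inv_val, Units.val_mk0]
        rw [eq_mul_inv_iff_mul_eq₀ hw0]
        field_simp
        ring
      have hAuBv : A u * (1 + E * A v) = A u := by
        calc A u * (1 + E * A v) = A u + A u * E * A v := by noncomm_ring
          _ = A u + E * A u * A v := by rw [L3]
          _ = A u + E * (A u * A v) := by rw [mul_assoc]
          _ = A u := by rw [St1, mul_zero, add_zero]
      have hAuBw : A u * (1 + E * A w) = A u := by
        calc A u * (1 + E * A w) = A u + A u * E * A w := by noncomm_ring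
          _ = A u + E * A u * A w := by rw [L3]
          _ = A u + E * (A u * A w) := by rw [mul_assoc]
          _ = A u := by rw [St3, mul_zero, add_zero]
      have hAw : A u * A w⁻¹ = 0 := by
        have h1 : A u * ((1 + E * A w) * A w⁻¹) = A u * (-A w) := by rw [D2]
        rw [← mul_assoc, hAuBw] at h1
        rw [h1, mul_neg, St3, neg_zero]
      calc A u * A (-u) = A u * (A v + (1 + E * A v) * A w⁻¹) := by rw [huvw, L1']
        _ = A u * A v + (A u * (1 + E * A v)) * A w⁻¹ := by noncomm_ring
        _ = 0 + A u * A w⁻¹ := by rw [St1, hAuBv]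
        _ = 0 := by rw [hAw, add_zero]
  -- `E * a = -2`
  have hEa : E * (a : S) = -2 := by
    have h := L1 (-1) (-1)
    rw [show ((-1 : Fˣ) * -1) = 1 by norm_num, hA1, ← ha] at h
    have hz : (2 + E * (a : S)) * (a : S) = 0 := by
      calc (2 + E * (a : S)) * (a : S) = (a : S) + (a : S) + E * (a : S) * (a : S) := by
            noncomm_ring
        _ = 0 := h.symm
    have h2 : (2 + E * (a : S)) = 0 := by
      have h3 := congrArg (fun x => x * ((a⁻¹ : Sˣ) : S)) hz
      simpa [mul_assoc] using h3
    exact eq_neg_of_add_eq_zero_right h2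
  have haE : (a : S) * E = -2 := by
    calc (a : S) * E = A (-1) * E := by rw [ha]
      _ = E * A (-1) := L3 (-1)
      _ = -2 := by rw [← ha, hEa]
  -- `E` kills squares
  have D6 : ∀ c : Fˣ, E * A (c * c) = 0 := by
    intro c
    have hBnega : E * (1 + E * (a : S)) = -E := by
      calc E * (1 + E * (a : S)) = E + E * (E * (a : S)) := by noncomm_ring
        _ = E + E * (-2) := by rw [hEa]
        _ = -E := by noncomm_ring
    have hflip : A c = (a : S) + (1 + E * (a : S)) * A (-c) := by
      have h := L1' (-1) (-c)
      rw [show ((-1 : Fˣ) * -c) = c by norm_num, ← ha] at h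
      exact h
    have hX : E * A c = E * (a : S) - E * A (-c) := by
      rw [hflip]
      calc E * ((a : S) + (1 + E * (a : S)) * A (-c))
          = E * (a : S) + (E * (1 + E * (a : S))) * A (-c) := by noncomm_ring
        _ = E * (a : S) + (-E) * A (-c) := by rw [hBnega]
        _ = E * (a : S) - E * A (-c) := by noncomm_ring
    have hET : E * (E * (a : S)) = -(E + E) := by rw [hEa]; noncomm_ring
    have hD4c : A (-c) * A c = 0 := by
      have h := D4 (-c); rwa [neg_neg] at h
    calc E * A (c * c)
        = E * A c + E * A c + E * (E * A c) * A c := by rw [L1]; noncomm_ring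
      _ = (E * (a : S) - E * A (-c)) + (E * (a : S) - E * A (-c)) +
          E * (E * (a : S) - E * A (-c)) * A c := by rw [hX]
      _ = (E * (a : S) + E * (a : S)) + (-(E * A (-c)) - E * A (-c)) +
          (E * (E * (a : S))) * A c - E * (E * A (-c)) * A c := by noncomm_ring
      _ = (E * (a : S) + E * (a : S)) + (-(E * A (-c)) - E * A (-c)) +
          (-(E + E)) * A c - E * (E * A (-c)) * A c := by rw [hET]
      _ = (E * (a : S) + E * (a : S)) - (E * A (-c) + E * A (-c)) -
          (E * A c + E * A c) - E * E * (A (-c) * A c) := by noncomm_ring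
      _ = (E * (a : S) + E * (a : S)) - (E * A (-c) + E * A (-c)) -
          ((E * (a : S) - E * A (-c)) + (E * (a : S) - E * A (-c))) -
          E * E * (A (-c) * A c) := by rw [hX]
      _ = -(E * E * (A (-c) * A c)) := by noncomm_ring
      _ = 0 := by rw [hD4c]; simp
  -- positive units die
  have D7 : ∀ u : Fˣ, 0 < (u : F) → A u = 0 := by
    intro u hu
    obtain ⟨b0, hb0⟩ := hsq (u : F) hu.le
    have hb0ne : b0 ≠ 0 := by
      intro h; rw [h] at hb0; simp at hb0; exact hu.ne' hb0.symm
    have hb1pos : 0 < |b0| := abs_pos.mpr hb0ne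
    have hb1 : |b0| ^ 2 = (u : F) := by rw [sq_abs]; exact hb0
    obtain ⟨c0, hc0⟩ := hsq |b0| hb1pos.le
    have hc0ne : c0 ≠ 0 := by
      intro h; rw [h] at hc0; simp at hc0; exact hb1pos.ne' hc0.symm
    set b : Fˣ := Units.mk0 |b0| hb1pos.ne' with hbdef
    set c : Fˣ := Units.mk0 c0 hc0ne with hcdef
    have hcc : c * c = b := by
      apply Units.ext
      rw [Units.val_mul]
      simp only [hbdef, hcdef, Units.val_mk0]
      rw [← hc0]; ring
    have hbb : b * b = u := by
      apply Units.ext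
      rw [Units.val_mul]
      simp only [hbdef, Units.val_mk0]
      rw [← hb1]; ring
    have hEb : E * A b = 0 := by rw [← hcc]; exact D6 c
    have h2b : (2 : S) * A b = 0 := by
      have h1 : (a : S) * (E * A b) = 0 := by rw [hEb, mul_zero]
      rw [← mul_assoc, haE] at h1
      have h2 := congrArg Neg.neg h1
      simpa using h2
    calc A u = A (b * b) := by rw [hbb]
      _ = A b + A b + E * A b * A b := L1 b b
      _ = (2 : S) * A b + (E * A b) * A b := by noncomm_ring
      _ = 0 := by rw [h2b, hEb, zero_mul, add_zero]
  -- negative units give `a`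
  have D8 : ∀ u : Fˣ, (u : F) < 0 → A u = (a : S) := by
    intro u hu
    have hp : (0 : F) < ((-u : Fˣ) : F) := by rw [Units.val_neg]; linarith
    have h := L1' (-1) (-u)
    rw [show ((-1 : Fˣ) * -u) = u by norm_num, D7 (-u) hp, mul_zero, add_zero] at h
    rw [h, ha]
  exact ⟨D7, D8, hEa, haE⟩


lemma mwRingHom_ext {F S : Type} [Field F] [Ring S] (f g : MW F →+* S)
    (hsym : ∀ u : Fˣ, f (MWsym F u) = g (MWsym F u)) (heta : f (MWeta F) = g (MWeta F)) :
    f = g := by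
  exact RingQuot.ringQuot_ext f g (ringHom_ext_freeAlg (fun x => by
    rcases x with u | u
    · exact hsym u
    · exact heta))

/-- for a real closed field `F` (a linear ordered field in which every
nonnegative element is a square and every odd-degree polynomial has a root),
localizing Milnor–Witt K-theory at `[-1]` gives the Laurent polynomial ring
`ℤ[[-1], [-1]⁻¹]` on the degree-1 variable `[-1]`: there is a map
`f : K^{MW}_*(F) → ℤ[t,t⁻¹]` sending `[-1]` to `t` (and `η` to `-2t⁻¹`) which is
universal among ring maps inverting `[-1]`. -/
theorem mw_localize_neg_one_realClosed (F : Type) [Field F] [LinearOrder F] [IsStrictOrderedRing F]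
    (hsq : ∀ a : F, 0 ≤ a → ∃ b : F, b ^ 2 = a)
    (hodd : ∀ p : Polynomial F, Odd p.natDegree → ∃ x : F, p.IsRoot x) :
    ∃ f : MW F →+* LaurentPolynomial ℤ,
      f (MWsym F (-1)) = LaurentPolynomial.T 1 ∧
      f (MWeta F) = -2 * LaurentPolynomial.T (-1) ∧
      ∀ (S : Type) [Ring S] (g : MW F →+* S), IsUnit (g (MWsym F (-1))) →
        ∃! h : LaurentPolynomial ℤ →+* S, h.comp f = g := by
  have hneg1 : ((-1 : Fˣ) : F) = -1 := by simp
  refine ⟨fmap F, ?_, fmap_eta F, ?_⟩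
  · rw [fmap_sym, hneg1, if_neg (by norm_num)]
  · intro S _ g hU
    have ha : ((hU.unit : Sˣ) : S) = g (MWsym F (-1)) := hU.unit_spec
    set a : Sˣ := hU.unit with hadef
    obtain ⟨D7, D8, hEa, haE⟩ := mw_abstract_key F hsq S (fun u => g (MWsym F u)) (g (MWeta F))
      (fun u v => by
        show g (MWsym F (u * v)) = _
        rw [MW_log, map_add, map_add, map_mul, map_mul])
      (fun u v h => by
        show g (MWsym F u) * g (MWsym F v) = 0
        rw [← map_mul, MW_steinberg F u v h, map_zero])
      (fun u => by
        show g (MWsym F u) * g (MWeta F) = _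
        rw [← map_mul, MW_etaComm, map_mul])
      a ha
    have hgeta : g (MWeta F) = -2 * ((a⁻¹ : Sˣ) : S) := by
      calc g (MWeta F) = g (MWeta F) * (a : S) * ((a⁻¹ : Sˣ) : S) :=
            (Units.mul_inv_cancel_right _ a).symm
        _ = -2 * ((a⁻¹ : Sˣ) : S) := by rw [hEa]
    refine ⟨hmap S a, ?_, ?_⟩
    · apply mwRingHom_ext
      · intro u
        show hmap S a (fmap F (MWsym F u)) = g (MWsym F u)
        rw [fmap_sym]
        rcases lt_or_gt_of_ne u.ne_zero with h1 | h1
        · rw [if_neg (not_lt.mpr h1.le), hmap_T, zpow_one, D8 u h1]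
        · rw [if_pos h1, map_zero, D7 u h1]
      · show hmap S a (fmap F (MWeta F)) = g (MWeta F)
        rw [fmap_eta, map_mul, hmap_T, zpow_neg_one, hgeta, map_neg, map_ofNat]
    · intro h' hh'
      have hval : ∀ x : MW F, h' (fmap F x) = g x := fun x => by
        have h2 := RingHom.congr_fun hh' x
        simpa using h2
      have e1 : h' (T 1) = (a : S) := by
        have h2 := hval (MWsym F (-1))
        rw [fmap_sym, hneg1, if_neg (by norm_num)] at h2
        rw [h2, ← ha]
      have em1 : h' (T (-1)) = ((a⁻¹ : Sˣ) : S) := by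
        have hp : h' (T 1) * h' (T (-1)) = 1 := by
          rw [← map_mul, ← T_add]
          norm_num
        calc h' (T (-1)) = ((a⁻¹ : Sˣ) : S) * ((a : S) * h' (T (-1))) := by
              rw [← mul_assoc]; simp
          _ = ((a⁻¹ : Sˣ) : S) * (h' (T 1) * h' (T (-1))) := by rw [e1]
          _ = ((a⁻¹ : Sˣ) : S) := by rw [hp, mul_one]
      have en : ∀ n : ℤ, h' (T n) = ((a ^ n : Sˣ) : S) := by
        intro n
        induction n using Int.induction_on with
        | zero => simp
        | succ k ih =>
          rw [T_add, map_mul, ih, e1, zpow_add_one, Units.val_mul]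
        | pred k ih =>
          rw [sub_eq_add_neg, T_add, map_mul, ih, em1, zpow_add, zpow_neg_one, Units.val_mul]
      apply AddMonoidAlgebra.ringHom_ext
      · intro b
        have hb : (AddMonoidAlgebra.single (0 : ℤ) b : LaurentPolynomial ℤ)
            = ((b : ℤ) : LaurentPolynomial ℤ) := eq_intCast LaurentPolynomial.C b
        rw [hb, map_intCast, map_intCast]
      · intro n
        have hs : (AddMonoidAlgebra.single (n : ℤ) (1 : ℤ) : LaurentPolynomial ℤ) = T n := rfl
        rw [hs, en n, hmap_T]
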